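/- arXiv:math/0412513 — 4 statements merged into one kernel-verified Lean document; each statement's English description precedes it below -/
import Mathlib

section
/- If f(t) = b·∏_{i=1}^n (t - α_i) is a nonzero complex polynomial with Mahler measure M(f) = |b|·∏ max(|α_i|, 1), then M(f) is at most the length ||f||, defined as the sum of the absolute values of the coefficients of f. -/
open Polynomial


noncomputable def L2sq (p : Polynomial ℂ) : ℝ :=
  ∑ i ∈ p.support, ‖p.coeff i‖ ^ 2

lemma L2sq_nonneg (p : Polynomial ℂ) : 0 ≤ L2sq p :=
  Finset.sum_nonneg fun i _ => by positivity

lemma L2sq_eq_range (p : Polynomial ℂ) {n : ℕ} (h : p.natDegree < n) :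
    L2sq p = ∑ i ∈ Finset.range n, ‖p.coeff i‖ ^ 2 := by
  refine Finset.sum_subset (Polynomial.supp_subset_range h) ?_
  intro i _ hi
  rw [Polynomial.notMem_support_iff.mp hi]
  simp

lemma abs_leadingCoeff_le_sqrt (p : Polynomial ℂ) :
    ‖p.leadingCoeff‖ ≤ Real.sqrt (L2sq p) := by
  by_cases hp : p = 0
  · simp [hp, L2sq]
  · rw [Real.le_sqrt (by positivity) (L2sq_nonneg p)]
    unfold L2sq
    rw [Polynomial.leadingCoeff]
    exact Finset.single_le_sum (f := fun i => ‖p.coeff i‖ ^ 2)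
      (fun i _ => by positivity) (Polynomial.natDegree_mem_support_of_nonzero hp)

lemma flipL2 (α : ℂ) (g : Polynomial ℂ) :
    L2sq ((X - C α) * g) = L2sq ((C (starRingEnd ℂ α) * X - 1) * g) := by
  set c := starRingEnd ℂ α with hc
  set n := g.natDegree + 1 with hn
  have h1 : ((X - C α) * g).natDegree < n + 1 := by
    calc ((X - C α) * g).natDegree ≤ (X - C α).natDegree + g.natDegree :=
          Polynomial.natDegree_mul_le
      _ ≤ 1 + g.natDegree := by rw [Polynomial.natDegree_X_sub_C]
      _ < n + 1 := by omega
  have h2 : ((C c * X - 1) * g).natDegree < n + 1 := by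
    calc ((C c * X - 1) * g).natDegree ≤ (C c * X - 1).natDegree + g.natDegree :=
          Polynomial.natDegree_mul_le
      _ ≤ 1 + g.natDegree := by
          gcongr
          refine le_trans (Polynomial.natDegree_sub_le _ _) ?_
          simp only [Polynomial.natDegree_one, max_le_iff]
          refine ⟨le_trans (Polynomial.natDegree_C_mul_le _ _) (by simp), by omega⟩
      _ < n + 1 := by omega
  rw [L2sq_eq_range _ h1, L2sq_eq_range _ h2]
  have cX : ∀ k, ((X - C α) * g).coeff (k+1) = g.coeff k - α * g.coeff (k+1) := by
    intro k
    rw [sub_mul, Polynomial.coeff_sub, Polynomial.coeff_X_mul, Polynomial.coeff_C_mul]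
  have cX0 : ((X - C α) * g).coeff 0 = - (α * g.coeff 0) := by
    rw [sub_mul, Polynomial.coeff_sub, Polynomial.mul_coeff_zero, Polynomial.coeff_C_mul]
    simp
  have dX : ∀ k, ((C c * X - 1) * g).coeff (k+1) = c * g.coeff k - g.coeff (k+1) := by
    intro k
    rw [sub_mul, Polynomial.coeff_sub, one_mul, mul_assoc, Polynomial.coeff_C_mul,
      Polynomial.coeff_X_mul]
  have dX0 : ((C c * X - 1) * g).coeff 0 = - g.coeff 0 := by
    rw [sub_mul, Polynomial.coeff_sub, one_mul, mul_assoc, Polynomial.mul_coeff_zero]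
    simp
  rw [Finset.sum_range_succ' _ n, Finset.sum_range_succ' _ n]
  simp only [cX, cX0, dX, dX0]
  have e1 : ∀ k, ‖g.coeff k - α * g.coeff (k+1)‖ ^ 2
      = Complex.normSq (g.coeff k) + Complex.normSq α * Complex.normSq (g.coeff (k+1))
        - 2 * (c * (g.coeff k * (starRingEnd ℂ) (g.coeff (k+1)))).re := by
    intro k
    rw [Complex.sq_norm, Complex.normSq_sub, Complex.normSq_mul]
    have : g.coeff k * (starRingEnd ℂ) (α * g.coeff (k+1))
        = c * (g.coeff k * (starRingEnd ℂ) (g.coeff (k+1))) := by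
      rw [map_mul, hc]; ring
    rw [this]
  have e2 : ∀ k, ‖c * g.coeff k - g.coeff (k+1)‖ ^ 2
      = Complex.normSq α * Complex.normSq (g.coeff k) + Complex.normSq (g.coeff (k+1))
        - 2 * (c * (g.coeff k * (starRingEnd ℂ) (g.coeff (k+1)))).re := by
    intro k
    rw [Complex.sq_norm, Complex.normSq_sub, Complex.normSq_mul, hc, Complex.normSq_conj,
      mul_assoc]
  have b1 : ‖-(α * g.coeff 0)‖ ^ 2
      = Complex.normSq α * Complex.normSq (g.coeff 0) := by
    rw [Complex.sq_norm, Complex.normSq_neg, Complex.normSq_mul]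
  have b2 : ‖-g.coeff 0‖ ^ 2 = Complex.normSq (g.coeff 0) := by
    rw [Complex.sq_norm, Complex.normSq_neg]
  simp only [e1, e2]
  rw [b1, b2]
  simp only [Finset.sum_sub_distrib, Finset.sum_add_distrib, ← Finset.mul_sum]
  set A := ∑ k ∈ Finset.range n, Complex.normSq (g.coeff k) with hA
  set A' := ∑ k ∈ Finset.range n, Complex.normSq (g.coeff (k+1)) with hA'
  have hgn : g.coeff n = 0 := g.coeff_natDegree_succ_eq_zero
  have hkey : A' = A - Complex.normSq (g.coeff 0) := by
    have e1' := Finset.sum_range_succ' (fun k => Complex.normSq (g.coeff k)) n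
    have e2' := Finset.sum_range_succ (fun k => Complex.normSq (g.coeff k)) n
    simp only [hgn, map_zero, add_zero] at e2'
    rw [hA, hA']
    linarith [e1', e2']
  rw [hkey]
  ring

lemma key_induction (s : Multiset ℂ) : ∀ g : Polynomial ℂ,
    ‖g.leadingCoeff‖ * (s.map (fun α => max (‖α‖) 1)).prod
      ≤ Real.sqrt (L2sq (g * (s.map fun α => X - C α).prod)) := by
  induction s using Multiset.induction_on with
  | empty => intro g; simpa using abs_leadingCoeff_le_sqrt g
  | cons a t ih =>
    intro g
    rw [Multiset.map_cons, Multiset.map_cons, Multiset.prod_cons, Multiset.prod_cons]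
    rcases le_or_gt (‖a‖) 1 with ha | ha
    · have hmax : max (‖a‖) 1 = 1 := max_eq_right ha
      rw [hmax, one_mul]
      have hlc : ((X - C a) * g).leadingCoeff = g.leadingCoeff := by
        rw [Polynomial.leadingCoeff_mul, Polynomial.leadingCoeff_X_sub_C, one_mul]
      have := ih ((X - C a) * g)
      rw [hlc] at this
      refine le_trans this (le_of_eq ?_)
      congr 1
      ring
    · have hmax : max (‖a‖) 1 = ‖a‖ := max_eq_left ha.le
      rw [hmax]
      set c := starRingEnd ℂ a with hc
      have hane : a ≠ 0 := fun h => by rw [h] at ha; exact absurd ha (by norm_num)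
      have hcne : c ≠ 0 := by simpa [hc] using hane
      have hfac : C c * X - 1 = C c * (X - C c⁻¹) := by
        rw [mul_sub, ← Polynomial.C_mul, mul_inv_cancel₀ hcne, Polynomial.C_1]
      have hlc : ((C c * X - 1) * g).leadingCoeff = c * g.leadingCoeff := by
        rw [Polynomial.leadingCoeff_mul, hfac, Polynomial.leadingCoeff_mul,
          Polynomial.leadingCoeff_C, Polynomial.leadingCoeff_X_sub_C, mul_one]
      have := ih ((C c * X - 1) * g)
      rw [hlc, norm_mul] at this
      have habs : ‖c‖ = ‖a‖ := by rw [hc, Complex.norm_conj]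
      rw [habs] at this
      have hperm : (C c * X - 1) * g * (Multiset.map (fun α => X - C α) t).prod
          = (C c * X - 1) * (g * (Multiset.map (fun α => X - C α) t).prod) := by ring
      rw [hperm, ← flipL2 a (g * (Multiset.map (fun α => X - C α) t).prod)] at this
      refine le_trans (le_of_eq ?_) (le_trans this (le_of_eq ?_))
      · ring
      · congr 1
        ring

/-- Mahler measure of a complex polynomial: |leading coeff| times the product
of max(|α|,1) over its roots (with multiplicity). -/
noncomputable def mahlerMeasure' (f : Polynomial ℂ) : ℝ :=
  ‖f.leadingCoeff‖ * (f.roots.map (fun α => max ‖α‖ 1)).prod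

/-- The length of a polynomial: sum of absolute values of its coefficients. -/
noncomputable def polyLength (f : Polynomial ℂ) : ℝ :=
  ∑ i ∈ f.support, ‖f.coeff i‖

theorem mahlerMeasure_le_length (f : Polynomial ℂ) (hf : f ≠ 0) :
    mahlerMeasure' f ≤ polyLength f := by
  have hsplit : f = C f.leadingCoeff * (f.roots.map fun a => X - C a).prod :=
    (Polynomial.C_leadingCoeff_mul_prod_multiset_X_sub_C IsAlgClosed.card_roots_eq_natDegree).symm
  have h1 : mahlerMeasure' f ≤ Real.sqrt (L2sq f) := by
    have := key_induction f.roots (C f.leadingCoeff)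
    rw [Polynomial.leadingCoeff_C, ← hsplit] at this
    exact this
  refine le_trans h1 ?_
  have h2 : L2sq f ≤ polyLength f ^ 2 := by
    rw [L2sq, polyLength]
    exact Finset.sum_sq_le_sq_sum_of_nonneg fun i _ => norm_nonneg _
  calc Real.sqrt (L2sq f) ≤ Real.sqrt (polyLength f ^ 2) := Real.sqrt_le_sqrt h2
    _ = polyLength f := by
        have hnn : (0:ℝ) ≤ polyLength f :=
          Finset.sum_nonneg fun i _ => norm_nonneg _
        rw [Real.sqrt_sq hnn]
end

section
/- Let f ∈ ℤ[t] be monic with f = 1 + a_1 t + ⋯ and let g = 1 + b_m t^m + ⋯ ∈ ℤ[t] with b_m ≠ 0, m ≥ 1. For each fixed k ≥ 1, the coefficient of t^{km} in f·g^N, viewed as a function of N (for N ≥ k), is a polynomial in N with leading term (b_m^k / k!)·N^k; in particular this coefficient is nonzero for all sufficiently large N. -/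
open Polynomial Finset

private lemma pow_coeff_eq_zero_of_lt' {h : Polynomial ℤ} {m : ℕ}
    (hlo : ∀ j, j < m → h.coeff j = 0) :
    ∀ (i n : ℕ), n < i * m → (h ^ i).coeff n = 0 := by
  intro i
  induction i with
  | zero => intro n hn; simp at hn
  | succ i ih =>
    intro n hn
    rw [pow_succ, coeff_mul]
    apply Finset.sum_eq_zero
    rintro ⟨a, b⟩ hab
    rw [Finset.HasAntidiagonal.mem_antidiagonal] at hab
    simp only at hab ⊢
    by_cases ha : a < i * m
    · rw [ih a ha, zero_mul]
    · have hmul : (i + 1) * m = i * m + m := by ring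
      have hb : b < m := by omega
      rw [hlo b hb, mul_zero]

private lemma pow_coeff_trailing' {h : Polynomial ℤ} {m : ℕ} {bm : ℤ}
    (hlo : ∀ j, j < m → h.coeff j = 0) (hcm : h.coeff m = bm) :
    ∀ i, (h ^ i).coeff (i * m) = bm ^ i := by
  intro i
  induction i with
  | zero => simp
  | succ i ih =>
    have hmul : (i + 1) * m = i * m + m := by ring
    rw [pow_succ, coeff_mul, Finset.sum_eq_single (i * m, m)]
    · simp only [ih, hcm, pow_succ]
    · rintro ⟨a, b⟩ hab hne
      rw [Finset.HasAntidiagonal.mem_antidiagonal] at hab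
      simp only at hab ⊢
      have hne' : ¬(a = i * m ∧ b = m) := by
        intro ⟨h1, h2⟩; exact hne (by simp [h1, h2])
      by_cases ha : a < i * m
      · rw [pow_coeff_eq_zero_of_lt' hlo i a ha, zero_mul]
      · have hb : b < m := by omega
        rw [hlo b hb, mul_zero]
    · intro hni
      exact absurd (Finset.HasAntidiagonal.mem_antidiagonal.mpr (by omega)) hni

/-- Let `f, g ∈ ℤ[t]` have constant term 1, and let `b_m t^m` (with `b_m ≠ 0`, `m ≥ 1`)
be the lowest-degree nonconstant term of `g`.  For each fixed `k ≥ 1`, the coefficient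
of `t^{k m}` in `f * g ^ N` is, for `N ≥ k`, given by a polynomial in `N` of degree `k`
with leading coefficient `b_m ^ k / k!`; in particular it is nonzero for all
sufficiently large `N`. -/
theorem coeff_mul_pow_polynomial_in_N
    (f g : Polynomial ℤ) (m : ℕ) (bm : ℤ)
    (hf0 : f.coeff 0 = 1) (hg0 : g.coeff 0 = 1)
    (hm : 1 ≤ m) (hbm : bm ≠ 0) (hgm : g.coeff m = bm)
    (hlow : ∀ j, 0 < j → j < m → g.coeff j = 0)
    (k : ℕ) (hk : 1 ≤ k) :
    (∃ P : Polynomial ℚ, P.natDegree = k ∧ P.leadingCoeff = (bm : ℚ) ^ k / (k.factorial : ℚ) ∧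
      ∀ N : ℕ, k ≤ N → ((f * g ^ N).coeff (k * m) : ℚ) = P.eval (N : ℚ)) ∧
    (∃ N₀ : ℕ, ∀ N : ℕ, N₀ ≤ N → (f * g ^ N).coeff (k * m) ≠ 0) := by
  have hm0 : m ≠ 0 := by omega
  set h : Polynomial ℤ := g - 1 with hh
  have hlo : ∀ j, j < m → h.coeff j = 0 := by
    intro j hj
    rcases Nat.eq_zero_or_pos j with rfl | hj0
    · simp [hh, hg0]
    · have hj0' : j ≠ 0 := by omega
      simp [hh, hlow j hj0 hj, coeff_one, hj0']
  have hcm : h.coeff m = bm := by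
    simp [hh, coeff_one, hm0, hgm]
  -- the integer sums S i
  set S : ℕ → ℤ := fun i =>
    ∑ ab ∈ Finset.HasAntidiagonal.antidiagonal (k * m), f.coeff ab.1 * (h ^ i).coeff ab.2 with hS
  have hS_zero : ∀ i, k < i → S i = 0 := by
    intro i hi
    apply Finset.sum_eq_zero
    rintro ⟨a, b⟩ hab
    rw [Finset.HasAntidiagonal.mem_antidiagonal] at hab
    simp only at hab ⊢
    have hb : b < i * m := by
      calc b ≤ k * m := by omega
      _ < i * m := by
        have := Nat.mul_lt_mul_of_lt_of_le hi (le_refl m) (by omega)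
        exact this
    rw [pow_coeff_eq_zero_of_lt' hlo i b hb, mul_zero]
  have hSk : S k = bm ^ k := by
    show (∑ ab ∈ Finset.HasAntidiagonal.antidiagonal (k * m), f.coeff ab.1 * (h ^ k).coeff ab.2) = bm ^ k
    rw [Finset.sum_eq_single (0, k * m)]
    · simp [hf0, pow_coeff_trailing' hlo hcm k]
    · rintro ⟨a, b⟩ hab hne
      rw [Finset.HasAntidiagonal.mem_antidiagonal] at hab
      simp only at hab ⊢
      have hne' : ¬(a = 0 ∧ b = k * m) := by
        intro ⟨h1, h2⟩; exact hne (by simp [h1, h2])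
      have hb : b < k * m := by omega
      rw [pow_coeff_eq_zero_of_lt' hlo k b hb, mul_zero]
    · intro hni
      exact absurd (Finset.HasAntidiagonal.mem_antidiagonal.mpr (by omega)) hni
  -- key identity over ℤ
  have key : ∀ N : ℕ, k ≤ N →
      (f * g ^ N).coeff (k * m) = ∑ i ∈ Finset.range (k + 1), (N.choose i : ℤ) * S i := by
    intro N hN
    have hgh : g = h + 1 := by rw [hh]; ring
    have hexp : (g ^ N).coeff = fun b =>
        ∑ i ∈ Finset.range (N + 1), (N.choose i : ℤ) * (h ^ i).coeff b := by
      funext b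
      rw [hgh, add_pow]
      rw [finset_sum_coeff]
      apply Finset.sum_congr rfl
      intro i _
      rw [one_pow, mul_one, ← C_eq_natCast, coeff_mul_C]
      push_cast
      ring
    rw [coeff_mul]
    have step1 : ∑ ab ∈ Finset.HasAntidiagonal.antidiagonal (k * m), f.coeff ab.1 * (g ^ N).coeff ab.2
        = ∑ i ∈ Finset.range (N + 1), (N.choose i : ℤ) * S i := by
      rw [hexp]
      simp only [Finset.mul_sum]
      rw [Finset.sum_comm]
      apply Finset.sum_congr rfl
      intro i _
      simp only [hS]
      rw [Finset.mul_sum]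
      apply Finset.sum_congr rfl
      intro ab _
      ring
    rw [step1]
    symm
    apply Finset.sum_subset
    · intro i hi
      simp only [Finset.mem_range] at hi ⊢
      omega
    · intro i _ hi
      simp only [Finset.mem_range] at hi
      rw [hS_zero i (by omega), mul_zero]
  -- the polynomial P
  set P : Polynomial ℚ := ∑ i ∈ Finset.range (k + 1),
      C ((S i : ℚ) / (i.factorial : ℚ)) * descPochhammer ℚ i with hP
  have hPeval : ∀ N : ℕ, P.eval (N : ℚ) = ∑ i ∈ Finset.range (k + 1),
      (N.choose i : ℚ) * (S i : ℚ) := by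
    intro N
    rw [hP, eval_finset_sum]
    apply Finset.sum_congr rfl
    intro i _
    rw [eval_mul, eval_C, descPochhammer_eval_eq_descFactorial,
      Nat.descFactorial_eq_factorial_mul_choose]
    have : (i.factorial : ℚ) ≠ 0 := by exact_mod_cast i.factorial_ne_zero
    push_cast
    field_simp
  have hPk : P.coeff k = (bm : ℚ) ^ k / (k.factorial : ℚ) := by
    rw [hP, finset_sum_coeff, Finset.sum_eq_single k]
    · rw [coeff_C_mul]
      have hmon := monic_descPochhammer ℚ k
      have hdeg := descPochhammer_natDegree ℚ k
      rw [show (descPochhammer ℚ k).coeff k = 1 by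
        have := hmon.coeff_natDegree; rwa [hdeg] at this]
      rw [hSk]; push_cast; ring
    · intro i hi hne
      rw [coeff_C_mul, coeff_eq_zero_of_natDegree_lt, mul_zero]
      rw [descPochhammer_natDegree ℚ i]
      simp only [Finset.mem_range] at hi
      omega
    · intro hni
      exact absurd (Finset.mem_range.mpr (by omega)) hni
  have hPkne : P.coeff k ≠ 0 := by
    rw [hPk]
    apply div_ne_zero
    · exact pow_ne_zero _ (by exact_mod_cast hbm)
    · exact_mod_cast k.factorial_ne_zero
  have hPdeg : P.natDegree = k := by
    apply le_antisymm
    · rw [hP]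
      apply natDegree_sum_le_of_forall_le
      intro i hi
      apply le_trans (natDegree_mul_le)
      rw [natDegree_C, descPochhammer_natDegree ℚ i]
      simp only [Finset.mem_range] at hi
      omega
    · exact le_natDegree_of_ne_zero hPkne
  have hPlead : P.leadingCoeff = (bm : ℚ) ^ k / (k.factorial : ℚ) := by
    rw [leadingCoeff, hPdeg, hPk]
  have hPne : P ≠ 0 := fun h0 => hPkne (by rw [h0]; simp)
  have keyQ : ∀ N : ℕ, k ≤ N → ((f * g ^ N).coeff (k * m) : ℚ) = P.eval (N : ℚ) := by
    intro N hN
    rw [key N hN, hPeval N]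
    push_cast
    ring_nf
  refine ⟨⟨P, hPdeg, hPlead, keyQ⟩, ?_⟩
  -- finiteness of roots
  have hfin : Set.Finite {N : ℕ | P.eval (N : ℚ) = 0} := by
    have : {N : ℕ | P.eval (N : ℚ) = 0} = (fun n : ℕ => (n : ℚ)) ⁻¹' {x | P.IsRoot x} := rfl
    rw [this]
    exact Set.Finite.preimage (Set.injOn_of_injective Nat.cast_injective)
      (P.finite_setOf_isRoot hPne)
  obtain ⟨B, hB⟩ := hfin.bddAbove
  refine ⟨max (B + 1) k, fun N hN => ?_⟩
  have hNk : k ≤ N := le_trans (le_max_right _ _) hN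
  have hNB : B + 1 ≤ N := le_trans (le_max_left _ _) hN
  have hroot : P.eval (N : ℚ) ≠ 0 := by
    intro h0
    have := hB h0
    omega
  intro h0
  apply hroot
  rw [← keyQ N hNk, h0]
  simp
end

section
/- For each integer k ≥ 0, the polynomial f_k(x) = 1 − x − x² − x^{2k+2} has exactly one root inside the open unit disk, and that root is real. -/
open Polynomial Metric
open scoped Classical Real

noncomputable section

lemma key_abs {ρ : ℝ} (hρ0 : 0 ≤ ρ) (hρ1 : ρ ≤ 1) {z : ℂ} (hz : ‖z‖ = ρ) :
    ρ^2 + ρ - 1 ≤ ‖1 - z - z^2‖ := by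
  rcases le_or_gt (ρ^2 + ρ - 1) 0 with h | h
  · exact le_trans h (norm_nonneg _)
  · have hns : Complex.normSq z = ρ^2 := by
      rw [← Complex.sq_norm, hz]
    have hxy : z.re^2 + z.im^2 = ρ^2 := by
      simpa [Complex.normSq_apply, pow_two] using hns
    have habs2 : ‖1 - z - z^2‖ ^ 2 = Complex.normSq (1 - z - z^2) :=
      Complex.sq_norm _
    have hre : (1 - z - z^2).re = 1 - z.re - z.re^2 + z.im^2 := by
      simp [pow_two, Complex.mul_re]; ring
    have him : (1 - z - z^2).im = -z.im - 2*z.re*z.im := by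
      simp [pow_two, Complex.mul_im]; ring
    have hval : Complex.normSq (1 - z - z^2)
        = (1 - z.re - z.re^2 + z.im^2)^2 + (-z.im - 2*z.re*z.im)^2 := by
      rw [Complex.normSq_apply, hre, him]; ring
    have hxle : z.re ≤ ρ := by nlinarith [sq_nonneg z.im, sq_nonneg (z.re - ρ)]
    have hxge : -ρ ≤ z.re := by nlinarith [sq_nonneg z.im, sq_nonneg (z.re + ρ)]
    have hsq : (ρ^2 + ρ - 1)^2 ≤ ‖1 - z - z^2‖ ^ 2 := by
      rw [habs2, hval]
      nlinarith [mul_nonneg (by linarith : (0:ℝ) ≤ ρ - z.re)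
        (by nlinarith : (0:ℝ) ≤ 4*z.re + 4*ρ + 2 - 2*ρ^2), hxy]
    nlinarith [norm_nonneg (1 - z - z^2)]

lemma integral_add_circ {f g : ℂ → ℂ} {c : ℂ} {R : ℝ} (hf : CircleIntegrable f c R)
    (hg : CircleIntegrable g c R) :
    (∮ z in C(c, R), (f z + g z)) = (∮ z in C(c, R), f z) + ∮ z in C(c, R), g z := by
  simp only [circleIntegral, smul_add, intervalIntegral.integral_add hf.out hg.out]

lemma cnt {ρ : ℝ} (hρ : 0 < ρ) (c : ℂ) (hc : c ≠ 0) (S : Multiset ℂ)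
    (hS : ∀ a ∈ S, ‖a‖ ≠ ρ) :
    (∮ z in C(0, ρ),
        eval z (derivative (C c * (S.map (fun a => X - C a)).prod)) /
          eval z (C c * (S.map (fun a => X - C a)).prod)) =
      2 * Real.pi * Complex.I * (Multiset.card (S.filter (fun a => ‖a‖ < ρ)) : ℂ) := by
  induction S using Multiset.induction with
  | empty => simp [circleIntegral]
  | cons a S ih =>
      have ha : ‖a‖ ≠ ρ := hS a (Multiset.mem_cons_self a S)
      have hS' : ∀ b ∈ S, ‖b‖ ≠ ρ := fun b hb => hS b (Multiset.mem_cons_of_mem hb)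
      set Q : Polynomial ℂ := C c * (S.map (fun b => X - C b)).prod with hQ
      have hPQ : C c * (((a ::ₘ S)).map (fun b => X - C b)).prod = (X - C a) * Q := by
        rw [Multiset.map_cons, Multiset.prod_cons, hQ]; ring
      have hQne : ∀ z ∈ sphere (0:ℂ) ρ, eval z Q ≠ 0 := by
        intro z hz
        have hzρ : ‖z‖ = ρ := by simpa using hz
        rw [hQ, eval_mul, eval_C, eval_multiset_prod]
        refine mul_ne_zero hc (Multiset.prod_ne_zero ?_)
        intro h0
        rw [Multiset.mem_map] at h0
        obtain ⟨p, hp, hpe⟩ := h0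
        obtain ⟨b, hb, rfl⟩ := Multiset.mem_map.mp hp
        have hzb : z = b := sub_eq_zero.mp (by simpa using hpe)
        exact hS' b hb (hzb ▸ hzρ)
      have hane : ∀ z ∈ sphere (0:ℂ) ρ, z - a ≠ 0 := by
        intro z hz h0
        have hzρ : ‖z‖ = ρ := by simpa using hz
        exact ha ((sub_eq_zero.mp h0) ▸ hzρ)
      -- pointwise identity on the sphere
      have heq : Set.EqOn
          (fun z => eval z (derivative (C c * (((a ::ₘ S)).map (fun b => X - C b)).prod)) /
            eval z (C c * (((a ::ₘ S)).map (fun b => X - C b)).prod))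
          (fun z => (z - a)⁻¹ + eval z (derivative Q) / eval z Q) (sphere 0 ρ) := by
        intro z hz
        have h1 := hQne z hz
        have h2 := hane z hz
        simp only [hPQ, derivative_mul, derivative_X_sub_C, eval_add, eval_mul, eval_sub,
          eval_X, eval_C, eval_one, one_mul]
        field_simp
      rw [circleIntegral.integral_congr hρ.le heq]
      have hi1 : CircleIntegrable (fun z => (z - a)⁻¹) 0 ρ := by
        refine ContinuousOn.circleIntegrable hρ.le ?_
        exact ContinuousOn.inv₀ (by fun_prop) hane
      have hi2 : CircleIntegrable (fun z => eval z (derivative Q) / eval z Q) 0 ρ := by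
        refine ContinuousOn.circleIntegrable hρ.le ?_
        exact ContinuousOn.div (by fun_prop) (by fun_prop) hQne
      rw [integral_add_circ hi1 hi2, ih hS']
      rcases lt_or_gt_of_ne ha with hin | hout
      · have hmem : a ∈ ball (0:ℂ) ρ := by
          simpa using hin
        rw [circleIntegral.integral_sub_inv_of_mem_ball hmem]
        have hfil : Multiset.card (Multiset.filter (fun b => ‖b‖ < ρ) (a ::ₘ S))
            = Multiset.card (Multiset.filter (fun b => ‖b‖ < ρ) S) + 1 := by
          simp [Multiset.filter_cons, hin]
        rw [hfil]
        push_cast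
        ring
      · have hzero : (∮ z in C(0, ρ), (z - a)⁻¹) = 0 := by
          refine Complex.circleIntegral_eq_zero_of_differentiable_on_off_countable hρ.le
            Set.countable_empty ?_ ?_
          · refine ContinuousOn.inv₀ (by fun_prop) ?_
            intro z hz h0
            have : ‖z‖ ≤ ρ := by simpa using hz
            rw [sub_eq_zero.mp h0] at this
            exact absurd this (not_le.mpr hout)
          · intro z hz
            refine DifferentiableAt.inv (by fun_prop) ?_
            intro h0
            have : ‖z‖ < ρ := by simpa using hz.1
            rw [sub_eq_zero.mp h0] at this
            exact absurd this (not_lt.mpr hout.le)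
        rw [hzero]
        have hfil : Multiset.card (Multiset.filter (fun b => ‖b‖ < ρ) (a ::ₘ S))
            = Multiset.card (Multiset.filter (fun b => ‖b‖ < ρ) S) := by
          simp [Multiset.filter_cons, not_lt.mpr hout.le]
        rw [hfil]
        ring

def pp (m : ℕ) (t : ℝ) : Polynomial ℂ := 1 - X - X^2 - C (t:ℂ) * X^m

lemma eval_pp (m : ℕ) (t : ℝ) (z : ℂ) : eval z (pp m t) = 1 - z - z^2 - t*z^m := by
  simp [pp]

lemma eval_dpp (m : ℕ) (t : ℝ) (z : ℂ) :
    eval z (derivative (pp m t)) = -1 - 2*z - t*m*z^(m-1) := by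
  simp [pp, derivative_X_pow]
  ring

lemma pp_ne_zero (m : ℕ) (hm : 1 ≤ m) (t : ℝ) : pp m t ≠ 0 := by
  intro h
  have h0 : eval 0 (pp m t) = 1 := by
    rw [eval_pp]
    rw [zero_pow (by omega : m ≠ 0)]
    ring
  rw [h] at h0
  simp at h0

lemma pp_zero (m : ℕ) : pp m 0 = 1 - X - X^2 := by simp [pp]

lemma roots_pp_zero (m : ℕ) :
    (pp m 0).roots = {(((Real.sqrt 5 - 1)/2 : ℝ) : ℂ), ((-((Real.sqrt 5 + 1)/2) : ℝ) : ℂ)} := by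
  have h5 : (Real.sqrt 5) ^ 2 = 5 := Real.sq_sqrt (by norm_num)
  set φ : ℂ := (((Real.sqrt 5 - 1)/2 : ℝ) : ℂ) with hφ
  set ψ : ℂ := ((-((Real.sqrt 5 + 1)/2) : ℝ) : ℂ) with hψ
  have hsum : C φ + C ψ = -1 := by
    rw [← C_add]
    have : φ + ψ = -1 := by
      rw [hφ, hψ]
      push_cast
      ring
    rw [this]
    simp
  have hprod : C φ * C ψ = -1 := by
    rw [← C_mul]
    have : φ * ψ = -1 := by
      rw [hφ, hψ]
      push_cast
      have : ((Real.sqrt 5 : ℂ))^2 = 5 := by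
        rw [← Complex.ofReal_pow, h5]; norm_num
      linear_combination (-1/4 : ℂ) * this
    rw [this]
    simp
  have key : pp m 0 = C (-1:ℂ) * ((X - C φ) * (X - C ψ)) := by
    rw [pp_zero]
    have hC : (C (-1:ℂ)) = -1 := by simp
    rw [hC]
    linear_combination (-(X : Polynomial ℂ)) * hsum + hprod
  rw [key, roots_C_mul _ (by norm_num : (-1:ℂ) ≠ 0),
    roots_mul (mul_ne_zero (X_sub_C_ne_zero φ) (X_sub_C_ne_zero ψ)),
    roots_X_sub_C, roots_X_sub_C]
  rfl


lemma pp_lower {m : ℕ} {ρ t : ℝ} (hρ0 : 0 < ρ) (hρ1 : ρ ≤ 1)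
    (ht0 : 0 ≤ t) (ht1 : t ≤ 1) {z : ℂ} (hz : ‖z‖ = ρ) :
    ρ^2 + ρ - 1 - ρ^m ≤ ‖eval z (pp m t)‖ := by
  rw [eval_pp]
  have h1 : ρ^2 + ρ - 1 ≤ ‖1 - z - z^2‖ := key_abs hρ0.le hρ1 hz
  have h2 : ‖(t:ℂ)*z^m‖ ≤ ρ^m := by
    rw [norm_mul, norm_pow, hz, Complex.norm_real, Real.norm_eq_abs, abs_of_nonneg ht0]
    have : t * ρ^m ≤ 1 * ρ^m := by
      apply mul_le_mul_of_nonneg_right ht1 (by positivity)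
    linarith
  have h3 := norm_sub_norm_le (1 - z - z^2) ((t:ℂ)*z^m)
  have : (1 - z - z^2 - (t:ℂ)*z^m) = (1 - z - z^2) - (t:ℂ)*z^m := by ring
  rw [this]
  linarith

lemma roots_off {m : ℕ} {ρ t : ℝ} (hρ0 : 0 < ρ) (hρ1 : ρ ≤ 1) (hδ : ρ^m < ρ^2+ρ-1)
    (ht0 : 0 ≤ t) (ht1 : t ≤ 1) :
    ∀ a ∈ (pp m t).roots, ‖a‖ ≠ ρ := by
  intro a ha h
  have hr : eval a (pp m t) = 0 := (mem_roots'.mp ha).2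
  have := pp_lower (m := m) hρ0 hρ1 ht0 ht1 h
  rw [hr] at this
  simp at this
  linarith

def NN (m : ℕ) (ρ t : ℝ) : ℕ :=
  Multiset.card ((pp m t).roots.filter (fun a => ‖a‖ < ρ))

def JJ (m : ℕ) (ρ t : ℝ) : ℂ :=
  ∮ z in C(0, ρ), eval z (derivative (pp m t)) / eval z (pp m t)

lemma J_eq {m : ℕ} (hm : 1 ≤ m) {ρ t : ℝ} (hρ0 : 0 < ρ)
    (hb : ∀ a ∈ (pp m t).roots, ‖a‖ ≠ ρ) :
    JJ m ρ t = 2 * Real.pi * Complex.I * (NN m ρ t : ℂ) := by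
  have hne := pp_ne_zero m hm t
  have hsplit : Splits (pp m t) := IsAlgClosed.splits _
  have hfact := hsplit.eq_prod_roots
  have hlc : (pp m t).leadingCoeff ≠ 0 := leadingCoeff_ne_zero.mpr hne
  have h := cnt hρ0 _ hlc (pp m t).roots hb
  rw [← hfact] at h
  exact h

lemma ppc_cont {m : ℕ} {ρ t : ℝ} (hρ0 : 0 < ρ) (hρ1 : ρ ≤ 1) (hδ : ρ^m < ρ^2+ρ-1)
    (ht0 : 0 ≤ t) (ht1 : t ≤ 1) :
    CircleIntegrable (fun z => eval z (derivative (pp m t)) / eval z (pp m t)) 0 ρ := by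
  refine ContinuousOn.circleIntegrable hρ0.le ?_
  refine ContinuousOn.div (by fun_prop) (by fun_prop) ?_
  intro z hz
  have hzρ : ‖z‖ = ρ := by simpa using hz
  have := pp_lower (m := m) (t := t) hρ0 hρ1 ht0 ht1 hzρ
  intro h0
  rw [h0] at this
  simp at this
  linarith

lemma J_lip {m : ℕ} {ρ t s : ℝ} (hρ0 : 0 < ρ) (hρ1 : ρ ≤ 1) (hδ : ρ^m < ρ^2+ρ-1)
    (ht0 : 0 ≤ t) (ht1 : t ≤ 1) (hs0 : 0 ≤ s) (hs1 : s ≤ 1) :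
    ‖JJ m ρ t - JJ m ρ s‖ ≤
      2 * Real.pi * ρ * ((3*m+3) * |t - s| / (ρ^2+ρ-1-ρ^m)^2) := by
  set δ := ρ^2+ρ-1-ρ^m with hδdef
  have hδ0 : 0 < δ := by simp only [hδdef]; linarith
  have hit := ppc_cont (t := t) hρ0 hρ1 hδ ht0 ht1
  have his := ppc_cont (t := s) hρ0 hρ1 hδ hs0 hs1
  have hsub : JJ m ρ t - JJ m ρ s = ∮ z in C(0, ρ),
      (eval z (derivative (pp m t)) / eval z (pp m t)
        - eval z (derivative (pp m s)) / eval z (pp m s)) :=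
    (circleIntegral.integral_sub hit his).symm
  rw [hsub]
  apply circleIntegral.norm_integral_le_of_norm_le_const hρ0.le
  intro z hz
  have hzρ : ‖z‖ = ρ := by simpa using hz
  have hDt : ‖eval z (pp m t)‖ ≥ δ := pp_lower hρ0 hρ1 ht0 ht1 hzρ
  have hDs : ‖eval z (pp m s)‖ ≥ δ := pp_lower hρ0 hρ1 hs0 hs1 hzρ
  have hDt0 : eval z (pp m t) ≠ 0 := by
    intro h0; rw [h0] at hDt; simp at hDt; linarith
  have hDs0 : eval z (pp m s) ≠ 0 := by
    intro h0; rw [h0] at hDs; simp at hDs; linarith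
  set G : ℂ := (-(m:ℂ)*z^(m-1))*(1 - z - z^2) - (-1-2*z)*(-z^m) with hG
  have key : eval z (derivative (pp m t)) / eval z (pp m t)
      - eval z (derivative (pp m s)) / eval z (pp m s)
      = (((t:ℂ) - (s:ℂ)) * G) / (eval z (pp m t) * eval z (pp m s)) := by
    rw [eval_pp, eval_pp, eval_dpp, eval_dpp] at *
    rw [div_sub_div _ _ hDt0 hDs0, hG]
    congr 1
    ring
  rw [key]
  have hts : ‖((t:ℂ)-(s:ℂ))‖ = |t-s| := by
    rw [show ((t:ℂ) - (s:ℂ)) = ((t - s : ℝ) : ℂ) by push_cast; ring]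
    rw [Complex.norm_real, Real.norm_eq_abs]
  have hGb : ‖G‖ ≤ 3*m+3 := by
    have hzn : ‖z‖ = ρ := by exact hzρ
    have hpow : ∀ j : ℕ, ‖z^j‖ ≤ 1 := by
      intro j
      rw [norm_pow, hzn]
      exact pow_le_one₀ hρ0.le hρ1
    have hA : ‖(1:ℂ) - z - z^2‖ ≤ 3 := by
      calc ‖(1:ℂ) - z - z^2‖ ≤ ‖(1:ℂ) - z‖ + ‖z^2‖ := norm_sub_le _ _
        _ ≤ ‖(1:ℂ)‖ + ‖z‖ + ‖z^2‖ := by linarith [norm_sub_le (1:ℂ) z]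
        _ ≤ 1 + 1 + 1 := by
            have := hpow 2
            simp only [norm_one, hzn]
            linarith
        _ = 3 := by norm_num
    have hA' : ‖(-1:ℂ)-2*z‖ ≤ 3 := by
      calc ‖(-1:ℂ)-2*z‖ ≤ ‖(-1:ℂ)‖ + ‖2*z‖ := norm_sub_le _ _
        _ ≤ 1 + 2*1 := by
            rw [norm_neg, norm_one, norm_mul]
            have : ‖(2:ℂ)‖ = 2 := by norm_num
            rw [this, hzn]
            linarith
        _ = 3 := by norm_num
    calc ‖G‖ ≤ ‖(-(m:ℂ)*z^(m-1))*(1 - z - z^2)‖ + ‖((-1:ℂ)-2*z)*(-z^m)‖ := norm_sub_le _ _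
      _ = ‖(m:ℂ)‖ * ‖z^(m-1)‖ * ‖(1:ℂ) - z - z^2‖ + ‖(-1:ℂ)-2*z‖ * ‖z^m‖ := by
          rw [norm_mul, norm_mul, norm_neg, norm_mul, norm_neg]
      _ ≤ (m:ℝ) * 1 * 3 + 3 * 1 := by
          have h1 := hpow (m-1)
          have h2 := hpow m
          have hm' : ‖(m:ℂ)‖ = (m:ℝ) := by
            simp [Complex.norm_natCast]
          rw [hm']
          have hmn : (0:ℝ) ≤ (m:ℝ) := Nat.cast_nonneg m
          apply add_le_add
          · apply mul_le_mul
            · apply mul_le_mul_of_nonneg_left h1 hmn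
            · exact hA
            · positivity
            · positivity
          · apply mul_le_mul hA' h2 (norm_nonneg _) (by norm_num)
      _ = 3*m+3 := by ring
  have hnum : ‖((t:ℂ)-(s:ℂ)) * G‖ ≤ (3*m+3) * |t-s| := by
    rw [norm_mul, hts]
    calc |t-s| * ‖G‖ ≤ |t-s| * (3*m+3) := mul_le_mul_of_nonneg_left hGb (abs_nonneg _)
      _ = (3*m+3) * |t-s| := by ring
  have hden : δ^2 ≤ ‖eval z (pp m t) * eval z (pp m s)‖ := by
    rw [norm_mul]
    calc δ^2 = δ * δ := sq δ
      _ ≤ _ := mul_le_mul hDt hDs hδ0.le (norm_nonneg _)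
  calc ‖((t:ℂ)-(s:ℂ)) * G / (eval z (pp m t) * eval z (pp m s))‖
      = ‖((t:ℂ)-(s:ℂ)) * G‖ / ‖eval z (pp m t) * eval z (pp m s)‖ := norm_div _ _
    _ ≤ (3*m+3) * |t-s| / δ^2 := by
        apply div_le_div₀ (by positivity) hnum (by positivity) hden

lemma NN_one_eq_zero {m : ℕ} (hm : 1 ≤ m) {ρ : ℝ} (hρ0 : 0 < ρ) (hρ1 : ρ ≤ 1)
    (hδ : ρ^m < ρ^2+ρ-1) : NN m ρ 1 = NN m ρ 0 := by
  have hπ := Real.pi_pos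
  set δ := ρ^2+ρ-1-ρ^m with hδdef
  have hδ0 : 0 < δ := by simp only [hδdef]; linarith
  have hM0 : (0:ℝ) < ρ*(3*m+3) := by positivity
  have hstep : ∀ t s : ℝ, 0 ≤ t → t ≤ 1 → 0 ≤ s → s ≤ 1 →
      |t - s| * (ρ*(3*m+3)) < δ^2 → NN m ρ t = NN m ρ s := by
    intro t s ht0 ht1 hs0 hs1 hlt
    by_contra hne
    have hJt := J_eq hm hρ0 (roots_off hρ0 hρ1 hδ ht0 ht1)
    have hJs := J_eq hm hρ0 (roots_off hρ0 hρ1 hδ hs0 hs1)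
    have h1 := J_lip (m := m) hρ0 hρ1 hδ ht0 ht1 hs0 hs1
    have h2 : JJ m ρ t - JJ m ρ s
        = 2 * Real.pi * Complex.I * (((NN m ρ t : ℝ) - (NN m ρ s : ℝ) : ℝ) : ℂ) := by
      rw [hJt, hJs]
      push_cast
      ring
    have h3 : ‖JJ m ρ t - JJ m ρ s‖ = 2 * Real.pi * |(NN m ρ t : ℝ) - (NN m ρ s : ℝ)| := by
      rw [h2]
      simp only [norm_mul, Complex.norm_I, Complex.norm_real, Real.norm_eq_abs, mul_one]
      rw [abs_of_pos hπ]
      norm_num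
    have hge : (1:ℝ) ≤ |(NN m ρ t : ℝ) - (NN m ρ s : ℝ)| := by
      have hne' : (NN m ρ t : ℤ) ≠ (NN m ρ s : ℤ) := by exact_mod_cast hne
      have h := Int.one_le_abs (sub_ne_zero.mpr hne')
      have h2 : ((1:ℤ):ℝ) ≤ ((|(NN m ρ t : ℤ) - (NN m ρ s : ℤ)| : ℤ) : ℝ) := by
        exact_mod_cast h
      rw [Int.cast_abs] at h2
      push_cast at h2
      exact_mod_cast h2
    have hup : 2 * Real.pi * ρ * ((3*m+3) * |t - s| / δ^2) < 2 * Real.pi := by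
      have hx : (3*m+3) * |t - s| / δ^2 * ρ < 1 := by
        rw [div_mul_eq_mul_div, div_lt_one (by positivity)]
        nlinarith [hlt]
      calc 2 * Real.pi * ρ * ((3*m+3) * |t - s| / δ^2)
          = 2 * Real.pi * ((3*m+3) * |t - s| / δ^2 * ρ) := by ring
        _ < 2 * Real.pi * 1 := by
            apply mul_lt_mul_of_pos_left hx (by positivity)
        _ = 2 * Real.pi := by ring
    have : 2 * Real.pi ≤ ‖JJ m ρ t - JJ m ρ s‖ := by
      rw [h3]
      nlinarith [hge]
    linarith
  obtain ⟨n, hn⟩ := exists_nat_one_div_lt (show (0:ℝ) < δ^2 / (ρ*(3*m+3)) by positivity)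
  set N : ℕ := n + 1 with hN
  have hN0 : (0:ℝ) < N := by positivity
  have hsmall : (1:ℝ)/N * (ρ*(3*m+3)) < δ^2 := by
    have : (1:ℝ)/N < δ^2 / (ρ*(3*m+3)) := by
      simpa [hN] using hn
    calc (1:ℝ)/N * (ρ*(3*m+3)) < δ^2 / (ρ*(3*m+3)) * (ρ*(3*m+3)) := by
          apply mul_lt_mul_of_pos_right this hM0
      _ = δ^2 := by field_simp
  have hind : ∀ j : ℕ, j ≤ N → NN m ρ ((j:ℝ)/N) = NN m ρ 0 := by
    intro j
    induction j with
    | zero => intro _; norm_num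
    | succ i ih =>
        intro hiN
        have hi : i ≤ N := by omega
        rw [← ih hi]
        apply hstep
        · positivity
        · rw [div_le_one hN0]
          exact_mod_cast hiN
        · positivity
        · rw [div_le_one hN0]
          exact_mod_cast hi
        · have habs : |((i+1:ℕ):ℝ)/N - (i:ℝ)/N| = 1/N := by
            rw [div_sub_div_same]
            push_cast
            rw [show ((i:ℝ) + 1 - i) = 1 by ring]
            rw [abs_of_pos (by positivity)]
          rw [habs]
          exact hsmall
  have h1 := hind N le_rfl
  have : ((N:ℝ))/N = 1 := by field_simp
  rwa [this] at h1

lemma sqrt5_lt : 2 < Real.sqrt 5 ∧ Real.sqrt 5 < 3 := by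
  constructor
  · have : (2:ℝ) = Real.sqrt 4 := by
      rw [show (4:ℝ) = 2^2 by norm_num, Real.sqrt_sq (by norm_num)]
    rw [this]
    exact Real.sqrt_lt_sqrt (by norm_num) (by norm_num)
  · have : (3:ℝ) = Real.sqrt 9 := by
      rw [show (9:ℝ) = 3^2 by norm_num, Real.sqrt_sq (by norm_num)]
    rw [this]
    exact Real.sqrt_lt_sqrt (by norm_num) (by norm_num)

lemma NN_zero {m : ℕ} {ρ : ℝ} (hφρ : (Real.sqrt 5 - 1)/2 < ρ) (hρ1 : ρ < 1) :
    NN m ρ 0 = 1 := by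
  obtain ⟨h2, h3⟩ := sqrt5_lt
  rw [NN, roots_pp_zero]
  rw [show ({(((Real.sqrt 5 - 1)/2 : ℝ) : ℂ), ((-((Real.sqrt 5 + 1)/2) : ℝ) : ℂ)} : Multiset ℂ)
    = (((Real.sqrt 5 - 1)/2 : ℝ) : ℂ) ::ₘ {((-((Real.sqrt 5 + 1)/2) : ℝ) : ℂ)} from rfl]
  rw [Multiset.filter_cons]
  have hc1 : ‖(Real.sqrt 5 : ℂ) - 1‖ / 2 < ρ := by
    rw [show ((Real.sqrt 5 : ℂ) - 1) = ((Real.sqrt 5 - 1 : ℝ) : ℂ) by push_cast; ring]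
    rw [Complex.norm_real, Real.norm_eq_abs, abs_of_pos (by linarith)]
    linarith
  have hc2 : ¬ (‖(Real.sqrt 5 : ℂ) + 1‖ / 2 < ρ) := by
    rw [show ((Real.sqrt 5 : ℂ) + 1) = ((Real.sqrt 5 + 1 : ℝ) : ℂ) by push_cast; ring]
    rw [Complex.norm_real, Real.norm_eq_abs, abs_of_pos (by linarith)]
    push_neg
    linarith
  simp [hc1, hc2, Multiset.filter_singleton]

lemma exists_rho {m : ℕ} (hm : 4 ≤ m) {s : ℝ} (hs0 : 0 ≤ s) (hs1 : s < 1) :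
    ∃ ρ : ℝ, s < ρ ∧ ρ < 1 ∧ ρ^m < ρ^2 + ρ - 1 := by
  have hd : HasDerivAt (fun x : ℝ => x^2 + x - 1 - x^m) ((3:ℝ) - m) 1 := by
    have h1 : HasDerivAt (fun x : ℝ => x^2) (2 : ℝ) 1 := by
      simpa using hasDerivAt_pow 2 (1:ℝ)
    have h2 : HasDerivAt (fun x : ℝ => x^m) ((m:ℝ)) 1 := by
      simpa using hasDerivAt_pow m (1:ℝ)
    have h3 := ((h1.add (hasDerivAt_id 1)).sub_const 1).sub h2
    exact h3.congr_deriv (by ring)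
  have hslope : Filter.Tendsto (slope (fun x : ℝ => x^2 + x - 1 - x^m) 1)
      (nhdsWithin (1:ℝ) {(1:ℝ)}ᶜ) (nhds ((3:ℝ) - m)) :=
    hasDerivAt_iff_tendsto_slope.mp hd
  have hmono : nhdsWithin (1:ℝ) (Set.Iio 1) ≤ nhdsWithin (1:ℝ) {(1:ℝ)}ᶜ :=
    nhdsWithin_mono 1 (fun x hx => ne_of_lt hx)
  have hneg : ((3:ℝ) - m) < 0 := by
    have : (4:ℝ) ≤ m := by exact_mod_cast hm
    linarith
  have hev1 : ∀ᶠ x in nhdsWithin (1:ℝ) (Set.Iio 1),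
      slope (fun x : ℝ => x^2 + x - 1 - x^m) 1 x < 0 :=
    (hslope.mono_left hmono).eventually_lt_const hneg
  have hev2 : ∀ᶠ x in nhdsWithin (1:ℝ) (Set.Iio 1), x ∈ Set.Ioo s 1 :=
    Ioo_mem_nhdsLT_of_mem ⟨hs1, le_rfl⟩
  obtain ⟨ρ, hρslope, hρmem⟩ := (hev1.and hev2).exists
  refine ⟨ρ, hρmem.1, hρmem.2, ?_⟩
  have hρ1 : ρ - 1 < 0 := by linarith [hρmem.2]
  rw [slope_def_field] at hρslope
  have hf1 : ((1:ℝ)^2 + 1 - 1 - 1^m) = 0 := by simp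
  rw [hf1] at hρslope
  have hnum : 0 < ρ^2 + ρ - 1 - ρ^m := by
    rcases div_neg_iff.mp hρslope with ⟨ha, hb⟩ | ⟨ha, hb⟩
    · linarith
    · linarith
  linarith

lemma core {m : ℕ} (hm : 4 ≤ m) {z w : ℂ} (hz1 : ‖z‖ < 1) (hw1 : ‖w‖ < 1)
    (hz0 : 1 - z - z^2 - z^m = 0) (hw0 : 1 - w - w^2 - w^m = 0) : z = w := by
  by_contra hne
  obtain ⟨hφ2, hφ3⟩ := sqrt5_lt
  set s : ℝ := max (max (‖z‖) (‖w‖)) ((Real.sqrt 5 - 1)/2) with hs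
  have hs0 : 0 ≤ s := le_trans (norm_nonneg z)
    (le_trans (le_max_left _ _) (le_max_left _ _))
  have hs1 : s < 1 := by
    apply max_lt (max_lt hz1 hw1)
    linarith
  obtain ⟨ρ, hsρ, hρ1, hδ⟩ := exists_rho hm hs0 hs1
  have hφρ : (Real.sqrt 5 - 1)/2 < ρ := lt_of_le_of_lt (le_max_right _ _) hsρ
  have hρ0 : 0 < ρ := by linarith
  have hm1 : 1 ≤ m := by omega
  have hNN1 : NN m ρ 1 = 1 := by
    rw [NN_one_eq_zero hm1 hρ0 hρ1.le hδ]
    exact NN_zero hφρ hρ1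
  have hzρ : ‖z‖ < ρ :=
    lt_of_le_of_lt (le_trans (le_max_left _ _) (le_max_left _ _)) hsρ
  have hwρ : ‖w‖ < ρ :=
    lt_of_le_of_lt (le_trans (le_max_right _ _) (le_max_left _ _)) hsρ
  have hzr : z ∈ (pp m 1).roots := by
    rw [mem_roots']
    refine ⟨pp_ne_zero m hm1 1, ?_⟩
    rw [IsRoot, eval_pp]
    push_cast
    linear_combination hz0
  have hwr : w ∈ (pp m 1).roots := by
    rw [mem_roots']
    refine ⟨pp_ne_zero m hm1 1, ?_⟩
    rw [IsRoot, eval_pp]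
    push_cast
    linear_combination hw0
  set filt := (pp m 1).roots.filter (fun a => ‖a‖ < ρ) with hfilt
  have hzf : z ∈ filt := Multiset.mem_filter.mpr ⟨hzr, hzρ⟩
  have hwf : w ∈ filt := Multiset.mem_filter.mpr ⟨hwr, hwρ⟩
  obtain ⟨tl, htl⟩ := Multiset.exists_cons_of_mem hzf
  have hwtl : w ∈ tl := by
    have h := hwf
    rw [htl] at h
    rcases Multiset.mem_cons.mp h with h' | h'
    · exact absurd h'.symm hne
    · exact h'
  have hcard : 2 ≤ Multiset.card filt := by
    rw [htl, Multiset.card_cons]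
    have : 0 < Multiset.card tl := Multiset.card_pos.mpr (by
      intro h0
      rw [h0] at hwtl
      simp at hwtl)
    omega
  have : Multiset.card filt = 1 := hNN1
  omega

/-- For each `k ≥ 0`, the polynomial `f_k(x) = 1 - x - x² - x^{2k+2}` has exactly one
root in the open unit disk, and that root is real. -/
theorem unique_real_root_in_disk (k : ℕ) :
    ∃ x : ℝ, |x| < 1 ∧
      (1 - X - X ^ 2 - X ^ (2 * k + 2) : Polynomial ℂ).eval (x : ℂ) = 0 ∧
      ∀ z : ℂ, (1 - X - X ^ 2 - X ^ (2 * k + 2) : Polynomial ℂ).eval z = 0 →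
        ‖z‖ < 1 → z = (x : ℂ) := by
  rcases Nat.eq_zero_or_pos k with hk | hk
  · subst hk
    refine ⟨1/2, by rw [abs_of_nonneg (by norm_num : (0:ℝ) ≤ 1/2)]; norm_num, ?_, ?_⟩
    · simp
      norm_num
    · intro z hz hz1
      simp at hz
      have hz' : (1 + z) * (1 - 2*z) = 0 := by linear_combination hz
      rcases mul_eq_zero.mp hz' with h | h
      · exfalso
        have : z = -1 := by linear_combination h
        rw [this] at hz1
        simp at hz1
      · have : z = 1/2 := by linear_combination (-1/2 : ℂ) * h
        rw [this]
        norm_num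
  · set m := 2*k + 2 with hmdef
    have hm : 4 ≤ m := by omega
    have hFc : Continuous (fun x : ℝ => 1 - x - x^2 - x^m) := by fun_prop
    have hIVT := intermediate_value_Icc' (by norm_num : (0:ℝ) ≤ 1) hFc.continuousOn
    have h0mem : (0:ℝ) ∈ Set.Icc ((fun x : ℝ => 1 - x - x^2 - x^m) 1)
        ((fun x : ℝ => 1 - x - x^2 - x^m) 0) := by
      simp only [Set.mem_Icc]
      constructor
      · simp [one_pow]
      · rw [zero_pow (by omega : m ≠ 0)]
        norm_num
    obtain ⟨r, hrIcc, hr0⟩ := hIVT h0mem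
    have hr01 : 0 ≤ r ∧ r ≤ 1 := ⟨hrIcc.1, hrIcc.2⟩
    have hrne1 : r ≠ 1 := by
      intro h
      rw [h] at hr0
      simp at hr0
      norm_num at hr0
    have hrabs : |r| < 1 := by
      rw [abs_of_nonneg hr01.1]
      exact lt_of_le_of_ne hr01.2 hrne1
    have hreval : 1 - (r:ℂ) - (r:ℂ)^2 - (r:ℂ)^m = 0 := by
      have : ((1 - r - r^2 - r^m : ℝ) : ℂ) = 0 := by
        rw [show (1 - r - r^2 - r^m : ℝ) = (fun x : ℝ => 1 - x - x^2 - x^m) r from rfl, hr0]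
        norm_num
      push_cast at this
      linear_combination this
    refine ⟨r, hrabs, ?_, ?_⟩
    · simp only [eval_sub, eval_pow, eval_X, eval_one]
      exact hreval
    · intro z hz hz1
      simp only [eval_sub, eval_pow, eval_X, eval_one] at hz
      have hrc : ‖(r:ℂ)‖ < 1 := by
        rw [Complex.norm_real, Real.norm_eq_abs]
        exact hrabs
      exact core hm hz1 hrc hz hreval
end
end

section
/- Lehmer's polynomial L(t) = t^{10} + t^9 − t^7 − t^6 − t^5 − t^4 − t^3 + t + 1 has exactly one root of modulus greater than 1, and this root is real and lies in the interval (1.17, 1.18). -/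
open Polynomial

/-- Lehmer's polynomial `L(t) = t¹⁰ + t⁹ - t⁷ - t⁶ - t⁵ - t⁴ - t³ + t + 1` over `ℂ`. -/
noncomputable def Lehmer : Polynomial ℂ :=
  X ^ 10 + X ^ 9 - X ^ 7 - X ^ 6 - X ^ 5 - X ^ 4 - X ^ 3 + X + 1

/-- The quotient polynomial `Q` with `L(z) = z⁵ · Q(z + 1/z)`. -/
noncomputable def Qp : Polynomial ℂ :=
  X ^ 5 + X ^ 4 - C 5 * X ^ 3 - C 5 * X ^ 2 + C 4 * X + C 3

lemma Qp_eval (y : ℂ) : Qp.eval y = y^5 + y^4 - 5*y^3 - 5*y^2 + 4*y + 3 := by simp [Qp]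

lemma Qp_natDegree : Qp.natDegree = 5 := by
  unfold Qp; compute_degree!

lemma Qp_ne_zero : Qp ≠ 0 := by
  intro h
  have := Qp_natDegree
  rw [h] at this
  simp at this

lemma five_roots (a b c d e : ℂ)
    (hab : a ≠ b) (hac : a ≠ c) (had : a ≠ d) (hae : a ≠ e)
    (hbc : b ≠ c) (hbd : b ≠ d) (hbe : b ≠ e)
    (hcd : c ≠ d) (hce : c ≠ e) (hde : d ≠ e)
    (ha : Qp.eval a = 0) (hb : Qp.eval b = 0) (hc : Qp.eval c = 0)
    (hd : Qp.eval d = 0) (he : Qp.eval e = 0) :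
    ∀ z : ℂ, Qp.eval z = 0 → z = a ∨ z = b ∨ z = c ∨ z = d ∨ z = e := by
  intro z hz
  have hsub : ({a, b, c, d, e} : Finset ℂ) ⊆ Qp.roots.toFinset := by
    intro x hx
    simp only [Finset.mem_insert, Finset.mem_singleton] at hx
    rcases hx with rfl | rfl | rfl | rfl | rfl <;>
      simp [Multiset.mem_toFinset, mem_roots, Qp_ne_zero, IsRoot, *]
  have hcard : ({a, b, c, d, e} : Finset ℂ).card = 5 := by
    simp [Finset.card_insert_of_notMem, hab, hac, had, hae, hbc, hbd, hbe, hcd, hce, hde]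
  have hle : Qp.roots.toFinset.card ≤ 5 := by
    calc Qp.roots.toFinset.card ≤ Multiset.card Qp.roots := Qp.roots.toFinset_card_le
    _ ≤ Qp.natDegree := Qp.card_roots'
    _ = 5 := Qp_natDegree
  have heq : ({a, b, c, d, e} : Finset ℂ) = Qp.roots.toFinset :=
    Finset.eq_of_subset_of_card_le hsub (by omega)
  have hzmem : z ∈ Qp.roots.toFinset := by
    simp [Multiset.mem_toFinset, mem_roots, Qp_ne_zero, IsRoot, hz]
  rw [← heq] at hzmem
  simpa using hzmem

lemma key_identity (y z : ℂ) (e : z ^ 2 + 1 = y * z) :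
    Qp.eval y * z ^ 5 = Lehmer.eval z := by
  rw [Qp_eval]
  simp only [Lehmer, eval_add, eval_sub, eval_pow, eval_X, eval_one]
  linear_combination (-(y^4*z^4 + y^3*z^5 + y^3*z^4 + y^3*z^3 + y^2*z^6 + y^2*z^5 - 3*y^2*z^4
    + y^2*z^3 + y^2*z^2 + y*z^7 + y*z^6 - 2*y*z^5 - 3*y*z^4 - 2*y*z^3 + y*z^2 + y*z
    + z^8 + z^7 - z^6 - 2*z^5 - 2*z^3 - z^2 + z + 1)) * e

/-- If `z + z⁻¹` is a real number and `|z| > 1`, then `z` itself is real. -/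
lemma real_case (z : ℂ) (hz : 1 < ‖z‖) (y : ℝ) (h : z + z⁻¹ = (y : ℂ)) :
    ∃ x : ℝ, z = (x : ℂ) ∧ 1 < |x| ∧ x + x⁻¹ = y := by
  have hz0 : z ≠ 0 := by
    intro h0; rw [h0] at hz; simp at hz; linarith
  set w := (starRingEnd ℂ) z with hw
  have hw0 : w ≠ 0 := by simpa [hw] using hz0
  have h' : w + w⁻¹ = (y : ℂ) := by
    have := congrArg (starRingEnd ℂ) h
    simpa [map_add, map_inv₀, Complex.conj_ofReal] using this
  have hcopy := h
  have e1 : z ^ 2 + 1 = y * z := by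
    field_simp at hcopy
    linear_combination hcopy
  have e2 : w ^ 2 + 1 = y * w := by
    field_simp at h'
    linear_combination h'
  have key : (z - w) * (z * w - 1) = 0 := by linear_combination w * e1 - z * e2
  rcases mul_eq_zero.1 key with h1 | h2
  · have hzw : w = z := by linear_combination -h1
    have hre : (z.re : ℂ) = z := Complex.conj_eq_iff_re.1 hzw
    refine ⟨z.re, hre.symm, ?_, ?_⟩
    · have habs : ‖z‖ = |z.re| := by
        conv_lhs => rw [← hre]
        simp
      rw [habs] at hz; exact hz
    · have hcast : ((z.re + z.re⁻¹ : ℝ) : ℂ) = (y : ℂ) := by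
        push_cast
        rw [hre]; exact h
      exact_mod_cast hcast
  · exfalso
    have hzw1 : z * w = 1 := by linear_combination h2
    have hns : Complex.normSq z = 1 := by
      have : (Complex.normSq z : ℂ) = 1 := by rw [← Complex.mul_conj]; exact hzw1
      exact_mod_cast this
    have : ‖z‖ ^ 2 = 1 := by rw [Complex.sq_norm]; exact hns
    nlinarith

noncomputable def qr : ℝ → ℝ := fun y => y^5 + y^4 - 5*y^3 - 5*y^2 + 4*y + 3
noncomputable def Lr : ℝ → ℝ := fun x => x^10 + x^9 - x^7 - x^6 - x^5 - x^4 - x^3 + x + 1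

lemma qr_cont : Continuous qr := by unfold qr; continuity
lemma Lr_cont : Continuous Lr := by unfold Lr; continuity

lemma key_identity_r (y x : ℝ) (e : x ^ 2 + 1 = y * x) :
    qr y * x ^ 5 = Lr x := by
  unfold qr Lr
  linear_combination (-(y^4*x^4 + y^3*x^5 + y^3*x^4 + y^3*x^3 + y^2*x^6 + y^2*x^5 - 3*y^2*x^4
    + y^2*x^3 + y^2*x^2 + y*x^7 + y*x^6 - 2*y*x^5 - 3*y*x^4 - 2*y*x^3 + y*x^2 + y*x
    + x^8 + x^7 - x^6 - 2*x^5 - 2*x^3 - x^2 + x + 1)) * e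

lemma alpha_exists : ∃ α : ℝ, α ∈ Set.Ioo (1.17 : ℝ) 1.18 ∧ Lr α = 0 := by
  refine intermediate_value_Ioo (by norm_num) Lr_cont.continuousOn ?_ |>.imp fun α h => ⟨h.1, h.2⟩
  constructor <;> (unfold Lr; norm_num)

lemma y1_exists : ∃ y : ℝ, y ∈ Set.Ioo (-2 : ℝ) (-1.8) ∧ qr y = 0 := by
  refine intermediate_value_Ioo (by norm_num) qr_cont.continuousOn ?_ |>.imp fun y h => ⟨h.1, h.2⟩
  constructor <;> (unfold qr; norm_num)

lemma y2_exists : ∃ y : ℝ, y ∈ Set.Ioo (-1.5 : ℝ) (-1.4) ∧ qr y = 0 := by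
  refine intermediate_value_Ioo' (by norm_num) qr_cont.continuousOn ?_ |>.imp fun y h => ⟨h.1, h.2⟩
  constructor <;> (unfold qr; norm_num)

lemma y3_exists : ∃ y : ℝ, y ∈ Set.Ioo (-0.7 : ℝ) (-0.5) ∧ qr y = 0 := by
  refine intermediate_value_Ioo (by norm_num) qr_cont.continuousOn ?_ |>.imp fun y h => ⟨h.1, h.2⟩
  constructor <;> (unfold qr; norm_num)

lemma y4_exists : ∃ y : ℝ, y ∈ Set.Ioo (0.9 : ℝ) 1 ∧ qr y = 0 := by
  refine intermediate_value_Ioo' (by norm_num) qr_cont.continuousOn ?_ |>.imp fun y h => ⟨h.1, h.2⟩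
  constructor <;> (unfold qr; norm_num)

lemma Qp_eval_real (y : ℝ) : Qp.eval (y : ℂ) = ((qr y : ℝ) : ℂ) := by
  rw [Qp_eval]; unfold qr; push_cast; ring

lemma Lehmer_eval_real (x : ℝ) : Lehmer.eval (x : ℂ) = ((Lr x : ℝ) : ℂ) := by
  simp only [Lehmer, eval_add, eval_sub, eval_pow, eval_X, eval_one]
  unfold Lr; push_cast; ring

set_option maxHeartbeats 1000000 in
/-- Lehmer's polynomial has exactly one root of modulus greater than 1; this root is
real and lies in the interval `(1.17, 1.18)`. -/
theorem lehmer_unique_large_root :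
    ∃ α : ℝ, 1.17 < α ∧ α < 1.18 ∧ Lehmer.eval (α : ℂ) = 0 ∧
      ∀ z : ℂ, Lehmer.eval z = 0 → 1 < ‖z‖ → z = (α : ℂ) := by
  obtain ⟨α, ⟨hα1, hα2⟩, hLα⟩ := alpha_exists
  obtain ⟨y1, ⟨hy1a, hy1b⟩, hq1⟩ := y1_exists
  obtain ⟨y2, ⟨hy2a, hy2b⟩, hq2⟩ := y2_exists
  obtain ⟨y3, ⟨hy3a, hy3b⟩, hq3⟩ := y3_exists
  obtain ⟨y4, ⟨hy4a, hy4b⟩, hq4⟩ := y4_exists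
  have hα0 : (0:ℝ) < α := by linarith
  have hαne : α ≠ 0 := ne_of_gt hα0
  -- β = α + α⁻¹ is a root of qr, and β > 2
  set β : ℝ := α + α⁻¹ with hβ
  have eα : α ^ 2 + 1 = β * α := by rw [hβ, add_mul, inv_mul_cancel₀ hαne]; ring
  have hqβ : qr β = 0 := by
    have := key_identity_r β α eα
    rw [hLα] at this
    have h5 : α ^ 5 ≠ 0 := pow_ne_zero _ hαne
    exact (mul_eq_zero.1 this).resolve_right h5
  have hβ2 : 2 < β := by
    have hinv : α * α⁻¹ = 1 := mul_inv_cancel₀ hαne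
    nlinarith [sq_nonneg (α - 1)]
  -- the five distinct complex roots of Qp
  have hLαC : Lehmer.eval (α : ℂ) = 0 := by rw [Lehmer_eval_real, hLα]; simp
  have hroots := five_roots (y1 : ℂ) (y2 : ℂ) (y3 : ℂ) (y4 : ℂ) (β : ℂ)
    (by exact_mod_cast ne_of_lt (by linarith : y1 < y2))
    (by exact_mod_cast ne_of_lt (by linarith : y1 < y3))
    (by exact_mod_cast ne_of_lt (by linarith : y1 < y4))
    (by exact_mod_cast ne_of_lt (by linarith : y1 < β))
    (by exact_mod_cast ne_of_lt (by linarith : y2 < y3))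
    (by exact_mod_cast ne_of_lt (by linarith : y2 < y4))
    (by exact_mod_cast ne_of_lt (by linarith : y2 < β))
    (by exact_mod_cast ne_of_lt (by linarith : y3 < y4))
    (by exact_mod_cast ne_of_lt (by linarith : y3 < β))
    (by exact_mod_cast ne_of_lt (by linarith : y4 < β))
    (by rw [Qp_eval_real, hq1]; simp)
    (by rw [Qp_eval_real, hq2]; simp)
    (by rw [Qp_eval_real, hq3]; simp)
    (by rw [Qp_eval_real, hq4]; simp)
    (by rw [Qp_eval_real, hqβ]; simp)
  refine ⟨α, hα1, hα2, hLαC, ?_⟩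
  intro z hzL hzabs
  have hz0 : z ≠ 0 := by
    intro h0; rw [h0] at hzabs; simp at hzabs; linarith
  have ez : z ^ 2 + 1 = (z + z⁻¹) * z := by field_simp
  have hQz : Qp.eval (z + z⁻¹) = 0 := by
    have := key_identity (z + z⁻¹) z ez
    rw [hzL] at this
    exact (mul_eq_zero.1 this).resolve_right (pow_ne_zero _ hz0)
  -- elimination of the unit-circle cases
  have elim : ∀ y : ℝ, -2 < y → y < 2 → z + z⁻¹ = (y : ℂ) → False := by
    intro y hya hyb hzy
    obtain ⟨x, hzx, hx1, hxy⟩ := real_case z hzabs y hzy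
    have hx0 : x ≠ 0 := by
      intro h0; rw [h0] at hx1; simp at hx1; linarith
    have ex : x ^ 2 + 1 = y * x := by
      have : x * (x + x⁻¹) = x * y := by rw [hxy]
      field_simp at this
      linear_combination this
    rcases lt_abs.mp hx1 with hgt | hlt
    · nlinarith [sq_nonneg (x - 1)]
    · nlinarith [sq_nonneg (x + 1)]
  rcases hroots (z + z⁻¹) hQz with h | h | h | h | h
  · exact absurd (elim y1 (by linarith) (by linarith) h) (by simp)
  · exact absurd (elim y2 (by linarith) (by linarith) h) (by simp)
  · exact absurd (elim y3 (by linarith) (by linarith) h) (by simp)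
  · exact absurd (elim y4 (by linarith) (by linarith) h) (by simp)
  · -- z + z⁻¹ = β, so z is real and equals α
    obtain ⟨x, hzx, hx1, hxβ⟩ := real_case z hzabs β h
    have hx0 : x ≠ 0 := by
      intro h0; rw [h0] at hx1; simp at hx1; linarith
    have ex : x ^ 2 + 1 = β * x := by
      have : x * (x + x⁻¹) = x * β := by rw [hxβ]
      field_simp at this
      linear_combination this
    have hfac : (x - α) * (x * α - 1) = 0 := by
      linear_combination α * ex - x * eα
    rcases mul_eq_zero.1 hfac with h1 | h2
    · have : x = α := by linarith [sub_eq_zero.mp h1]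
      rw [hzx, this]
    · exfalso
      have hxa : x * α = 1 := by linarith [sub_eq_zero.mp h2]
      rcases lt_abs.mp hx1 with hgt | hlt
      · have : (1:ℝ) * 1 < x * α := by
          apply mul_lt_mul'' hgt (by linarith) (by norm_num) (by norm_num)
        linarith
      · have hxneg : x < 0 := by linarith
        have : x * α < 0 := mul_neg_of_neg_of_pos hxneg hα0
        linarith
end
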